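/- Let λ be a Young diagram, b a flag vector, and T∈SSYT(λ,b) a flagged semistandard tableau that satisfies the recursion T(i,j)=min{T(i+1,j)−1, T(i−1,j+1)+1} at every box of λ that is not a northeast corner. Then for any two special boxes (i,j) and (i',j') of λ with i≤i' and j≤j', one has T(top(j),j) − top(j) ≤ T(top(j'),j') − top(j'). -/

import Mathlib

open scoped Classical

noncomputable section

namespace DriftKL

/-- `(i,j)` is a box of the Young diagram of `lam` (French notation, rows indexed
bottom-to-top, everything 1-indexed). -/
def InShape (lam : ℕ → ℕ) (i j : ℕ) : Prop := 1 ≤ i ∧ 1 ≤ j ∧ j ≤ lam i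

/-- `lam` encodes a partition `λ₁ ≥ ⋯ ≥ λ_ℓ > 0` (1-indexed; `0` outside `[1,ℓ]`). -/
def IsPartitionFun (ℓ : ℕ) (lam : ℕ → ℕ) : Prop :=
  (∀ i, 1 ≤ i → i ≤ ℓ → 1 ≤ lam i) ∧
  (∀ i j, 1 ≤ i → i ≤ j → j ≤ ℓ → lam j ≤ lam i) ∧
  (∀ i, i = 0 ∨ ℓ < i → lam i = 0)

/-- The Finset of boxes of the Young diagram of `lam`. -/
def shapeBoxes (ℓ : ℕ) (lam : ℕ → ℕ) : Finset (ℕ × ℕ) :=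
  (Finset.Icc 1 ℓ ×ˢ Finset.Icc 1 (lam 1)).filter (fun p => p.2 ≤ lam p.1)

/-- Semistandardness: positive entries, rows weakly increase left-to-right,
columns strictly increase bottom-to-top. -/
def IsSSYT (lam : ℕ → ℕ) (T : ℕ → ℕ → ℕ) : Prop :=
  (∀ i j, InShape lam i j → 1 ≤ T i j) ∧
  (∀ i j, InShape lam i j → InShape lam i (j+1) → T i j ≤ T i (j+1)) ∧
  (∀ i j, InShape lam i j → InShape lam (i+1) j → T i j < T (i+1) j)

/-- Flagged semistandard Young tableaux of shape `lam`, flagged by `b`,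
represented as functions vanishing off the shape. -/
def SSYTset (lam b : ℕ → ℕ) : Set (ℕ → ℕ → ℕ) :=
  {T | IsSSYT lam T ∧ (∀ i j, InShape lam i j → T i j ≤ b i) ∧
       (∀ i j, ¬ InShape lam i j → T i j = 0)}

/-- Boundary convention: `T(i,0) = 1` for `i > 0`, and `T(0,j) = 0`. -/
def TxC (T : ℕ → ℕ → ℕ) (i j : ℕ) : ℕ :=
  if i = 0 then 0 else if j = 0 then 1 else T i j

/-- The saturation `sat(T)`: `sat(T)(i,j) = [max{T(i,j-1), 1+T(i-1,j)}, T(i,j)]`. -/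
def satF (lam : ℕ → ℕ) (T : ℕ → ℕ → ℕ) (i j : ℕ) : Finset ℕ :=
  if InShape lam i j then
    Finset.Icc (max (TxC T i (j - 1)) (TxC T (i - 1) j + 1)) (T i j)
  else ∅

/-- `depth(T) = |sat(T)| - |λ|`. -/
def depthT (ℓ : ℕ) (lam : ℕ → ℕ) (T : ℕ → ℕ → ℕ) : ℕ :=
  (∑ p ∈ shapeBoxes ℓ lam, (satF lam T p.1 p.2).card) - (shapeBoxes ℓ lam).card

/-- Flagged set-valued semistandard fillings: each box carries a nonempty finite
set of positive integers bounded by the flag, such that every choice of one entry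
per box is semistandard.  Off the shape the value is `∅`. -/
def SetSSYTset (lam b : ℕ → ℕ) : Set (ℕ → ℕ → Finset ℕ) :=
  {U | (∀ i j, InShape lam i j → (U i j).Nonempty) ∧
       (∀ i j, ¬ InShape lam i j → U i j = ∅) ∧
       (∀ i j, InShape lam i j → ∀ x ∈ U i j, 1 ≤ x ∧ x ≤ b i) ∧
       (∀ T : ℕ → ℕ → ℕ, (∀ i j, InShape lam i j → T i j ∈ U i j) →
          (∀ i j, InShape lam i j → InShape lam i (j+1) → T i j ≤ T i (j+1)) ∧
          (∀ i j, InShape lam i j → InShape lam (i+1) j → T i j < T (i+1) j))}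

/-- `ex(U) = |U| - |λ|`. -/
def exU (ℓ : ℕ) (lam : ℕ → ℕ) (U : ℕ → ℕ → Finset ℕ) : ℕ :=
  (∑ p ∈ shapeBoxes ℓ lam, (U p.1 p.2).card) - (shapeBoxes ℓ lam).card

/-- The extension of a filling `T` of `λ` by `T(i,j) = ∞` if (`i > 0` and
`(i,j) ∉ λ`) or `j > λ₁`, and `T(0,j) = 0` for `1 ≤ j ≤ λ₁`. -/
def extT (lam : ℕ → ℕ) (T : ℕ → ℕ → ℕ) (i j : ℕ) : ℕ∞ :=
  if lam 1 < j then ⊤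
  else if i = 0 then 0
  else if InShape lam i j then (T i j : ℕ∞) else ⊤

/-- `T` satisfies the recursion `T(i,j) = min{T(i+1,j) - 1, T(i-1,j+1) + 1}`
at the box `(i,j)` (with the extension conventions). -/
def RecursionAt (lam : ℕ → ℕ) (T : ℕ → ℕ → ℕ) (i j : ℕ) : Prop :=
  (T i j : ℕ∞) = min (extT lam T (i + 1) j - 1) (extT lam T (i - 1) (j + 1) + 1)

/-- `(i,j)` is a northeast corner of `λ`. -/
def NECorner (lam : ℕ → ℕ) (i j : ℕ) : Prop :=
  InShape lam i j ∧ ¬ InShape lam (i + 1) j ∧ ¬ InShape lam i (j + 1)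

/-- `top(j)`: the largest `i` with `(i,j) ∈ λ` (`0` if the column is empty). -/
def colTop (lam : ℕ → ℕ) (j : ℕ) : ℕ := sSup {i | InShape lam i j}

/-- `|arm(i,j)|`. -/
def armLen (lam : ℕ → ℕ) (i j : ℕ) : ℕ := lam i - j

/-- `|leg(i,j)|`. -/
def legLen (lam : ℕ → ℕ) (i j : ℕ) : ℕ := colTop lam j - i

/-- `(p,q)` lies in `{(i,j)} ∪ arm(i,j) ∪ leg(i,j)`. -/
def InCross (lam : ℕ → ℕ) (i j p q : ℕ) : Prop :=
  (p = i ∧ j ≤ q ∧ q ≤ lam i) ∨ (q = j ∧ i ≤ p ∧ p ≤ colTop lam j)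

/-- `(i,j) ∈ λ`, has equal arm and leg lengths, and no box of its cross
satisfies `Prev` (the "already special" predicate). -/
def CandAt (lam : ℕ → ℕ) (Prev : ℕ → ℕ → Prop) (i j : ℕ) : Prop :=
  InShape lam i j ∧ armLen lam i j = legLen lam i j ∧
    ∀ p q, InCross lam i j p q → ¬ Prev p q

/-- `SpecialLevels lam z i j` holds iff `(i,j)` is `y`-special for some `y < z`:
a `z`-special box is one which is maximal (componentwise) among candidates
relative to the boxes that are `y`-special for `y < z`. -/
def SpecialLevels (lam : ℕ → ℕ) : ℕ → ℕ → ℕ → Prop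
  | 0 => fun _ _ => False
  | z + 1 => fun i j =>
      SpecialLevels lam z i j ∨
        (CandAt lam (SpecialLevels lam z) i j ∧
          ∀ p q, CandAt lam (SpecialLevels lam z) p q → i ≤ p → j ≤ q → i = p ∧ j = q)

/-- `(i,j)` is special, i.e. `z`-special for some `z`. -/
def IsSpecial (lam : ℕ → ℕ) (i j : ℕ) : Prop := ∃ z, SpecialLevels lam z i j

/-- The flag `b_i = max{m ≥ 1 : B_m ≥ λ_i + m - i}` attached to partitions `λ ⊆ B`. -/
def flagOfPart (lam B : ℕ → ℕ) (i : ℕ) : ℕ :=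
  sSup {m : ℕ | 1 ≤ m ∧ (lam i : ℤ) + m - i ≤ (B m : ℤ)}

/-- If `T ∈ SSYT(λ,b)` satisfies the recursion at every
non-northeast-corner box, then for special boxes `(i,j)`, `(i',j')` with
`i ≤ i'` and `j ≤ j'` one has
`T(top(j),j) - top(j) ≤ T(top(j'),j') - top(j')`. -/
-- ## auxiliary lemmas

lemma lam_anti {ℓ : ℕ} {lam : ℕ → ℕ} (hlam : IsPartitionFun ℓ lam)
    {a b : ℕ} (ha : 1 ≤ a) (hab : a ≤ b) : lam b ≤ lam a := by
  by_cases hb : b ≤ ℓ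
  · exact hlam.2.1 a b ha hab hb
  · rw [hlam.2.2 b (Or.inr (by omega))]; omega

lemma col_bdd {ℓ : ℕ} {lam : ℕ → ℕ} (hlam : IsPartitionFun ℓ lam)
    (j : ℕ) : BddAbove {i | InShape lam i j} := by
  refine ⟨ℓ, fun x hx => ?_⟩
  obtain ⟨h1, h2, h3⟩ := hx
  by_contra hc
  have := hlam.2.2 x (Or.inr (by omega))
  omega

lemma le_colTop {ℓ : ℕ} {lam : ℕ → ℕ} (hlam : IsPartitionFun ℓ lam)
    {i j : ℕ} (h : InShape lam i j) : i ≤ colTop lam j :=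
  le_csSup (col_bdd hlam j) h

lemma lam_le_iff {ℓ : ℕ} {lam : ℕ → ℕ} (hlam : IsPartitionFun ℓ lam)
    {i j : ℕ} (hi : 1 ≤ i) (hj : 1 ≤ j) :
    j ≤ lam i ↔ i ≤ colTop lam j := by
  constructor
  · intro h; exact le_colTop hlam ⟨hi, hj, h⟩
  · intro h
    rcases Set.eq_empty_or_nonempty {p | InShape lam p j} with he | hne
    · exfalso
      have : colTop lam j = 0 := by
        unfold colTop; rw [he]; exact csSup_empty
      omega
    · have hm : InShape lam (colTop lam j) j := Nat.sSup_mem hne (col_bdd hlam j)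
      exact le_trans hm.2.2 (lam_anti hlam hi h)

lemma colTop_anti {ℓ : ℕ} {lam : ℕ → ℕ} (hlam : IsPartitionFun ℓ lam)
    {a b : ℕ} (ha : 1 ≤ a) (hab : a ≤ b) :
    colTop lam b ≤ colTop lam a := by
  rcases Set.eq_empty_or_nonempty {p | InShape lam p b} with he | hne
  · have : colTop lam b = 0 := by unfold colTop; rw [he]; exact csSup_empty
    omega
  · have hm : InShape lam (colTop lam b) b := Nat.sSup_mem hne (col_bdd hlam b)
    exact le_colTop hlam ⟨hm.1, ha, le_trans hab hm.2.2⟩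

lemma SL_mono {lam : ℕ → ℕ} {z z' i j : ℕ} (hz : z ≤ z')
    (h : SpecialLevels lam z i j) : SpecialLevels lam z' i j := by
  induction z', hz using Nat.le_induction with
  | base => exact h
  | succ n hn ih => exact Or.inl ih

lemma exists_level {lam : ℕ → ℕ} : ∀ z i j, SpecialLevels lam z i j →
    ∃ y, y + 1 ≤ z ∧ CandAt lam (SpecialLevels lam y) i j ∧
      (∀ p q, CandAt lam (SpecialLevels lam y) p q → i ≤ p → j ≤ q → i = p ∧ j = q) := by
  intro z
  induction z with
  | zero => intro i j h; exact absurd h (by simp [SpecialLevels])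
  | succ n ih =>
    intro i j h
    rcases h with h | ⟨hc, hm⟩
    · obtain ⟨y, hy, hc, hm⟩ := ih i j h
      exact ⟨y, by omega, hc, hm⟩
    · exact ⟨n, le_refl _, hc, hm⟩

/-- Lemma E: every arm=leg box has a "matched" box weakly to its right in its row. -/
lemma rowE {ℓ : ℕ} {lam : ℕ → ℕ} (hlam : IsPartitionFun ℓ lam)
    {p q : ℕ} (hin : InShape lam p q) (hh : lam p + p = colTop lam q + q) :
    ∃ c, q ≤ c ∧ InShape lam p c ∧ lam p + p = colTop lam c + c ∧
      ∀ r, p < r → r ≤ colTop lam c → lam p + p < lam r + r := by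
  by_cases hrow : ∀ r, p < r → r ≤ colTop lam q → lam p + p < lam r + r
  · exact ⟨q, le_rfl, hin, hh, hrow⟩
  · push_neg at hrow
    obtain ⟨r, hpr, hrt, hRr⟩ := hrow
    have hP : ∃ v, p ≤ v ∧ lam (v + 1) + (v + 1) ≤ lam p + p :=
      ⟨r - 1, by omega, by rw [Nat.sub_add_cancel (by omega)]; exact hRr⟩
    obtain ⟨v, hv1, hv2, hvr, hvmin⟩ :
        ∃ v, p ≤ v ∧ lam (v + 1) + (v + 1) ≤ lam p + p ∧ v ≤ r - 1 ∧
          ∀ w, w < v → ¬(p ≤ w ∧ lam (w + 1) + (w + 1) ≤ lam p + p) :=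
      ⟨Nat.find hP, (Nat.find_spec hP).1, (Nat.find_spec hP).2,
        Nat.find_le ⟨by omega, by rw [Nat.sub_add_cancel (by omega)]; exact hRr⟩,
        fun w hw => Nat.find_min hP hw⟩
    have hvt : v < colTop lam q := by omega
    have key1 : ∀ x, p < x → x ≤ v → lam p + p < lam x + x := by
      intro x hx1 hx2
      have hmin := hvmin (x - 1) (by omega)
      push_neg at hmin
      have h2 := hmin (by omega)
      rw [Nat.sub_add_cancel (by omega)] at h2
      omega
    obtain ⟨c, hcv⟩ : ∃ c, c + v = lam p + p := ⟨lam p + p - v, by omega⟩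
    have hclam_v : c ≤ lam v := by
      rcases eq_or_lt_of_le hv1 with h | h
      · subst h; omega
      · have := key1 v h (le_refl _); omega
    have hcgt : lam (v + 1) < c := by omega
    have h1v : 1 ≤ v := le_trans hin.1 hv1
    have hcq : q < c := by omega
    have h1c : 1 ≤ c := by omega
    have hvc : v ≤ colTop lam c := (lam_le_iff hlam h1v h1c).mp hclam_v
    have hvc2 : colTop lam c ≤ v := by
      by_contra hlt
      push_neg at hlt
      have : c ≤ lam (v + 1) := (lam_le_iff hlam (by omega) h1c).mpr (by omega)
      omega
    have hceq : colTop lam c = v := le_antisymm hvc2 hvc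
    refine ⟨c, le_of_lt hcq, ⟨hin.1, h1c, by omega⟩, by rw [hceq]; omega, ?_⟩
    intro r' hr1 hr2
    rw [hceq] at hr2
    exact key1 r' hr1 hr2

/-- F1: every special box is matched. -/
lemma specialMatched {ℓ : ℕ} {lam : ℕ → ℕ} (hlam : IsPartitionFun ℓ lam) :
    ∀ z p q, SpecialLevels lam z p q →
      InShape lam p q ∧ lam p + p = colTop lam q + q ∧
        ∀ r, p < r → r ≤ colTop lam q → lam p + p < lam r + r := by
  intro z
  induction z with
  | zero => intro p q h; exact absurd h (by simp [SpecialLevels])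
  | succ n ih =>
    intro p q h
    rcases h with h | ⟨hc, hm⟩
    · exact ih p q h
    · obtain ⟨hin, harm, hcross⟩ := hc
      have h1 : q ≤ lam p := hin.2.2
      have h2 : p ≤ colTop lam q := le_colTop hlam hin
      have hh : lam p + p = colTop lam q + q := by
        unfold armLen legLen at harm; omega
      obtain ⟨c, hqc, hpc, hhc, hrowc⟩ := rowE hlam hin hh
      rcases eq_or_lt_of_le hqc with heq | hlt
      · subst heq
        exact ⟨hin, hhc, hrowc⟩
      · exfalso
        have hcand : CandAt lam (SpecialLevels lam n) p c := by
          refine ⟨hpc, ?_, ?_⟩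
          · have h1' : c ≤ lam p := hpc.2.2
            have h2' : p ≤ colTop lam c := le_colTop hlam hpc
            unfold armLen legLen; omega
          · intro x y hxy hsp
            rcases hxy with ⟨hx, hy1, hy2⟩ | ⟨hy, hx1, hx2⟩
            · exact hcross x y (Or.inl ⟨hx, by omega, hy2⟩) hsp
            · obtain ⟨hinx, hhx, _⟩ := ih x y hsp
              have hhx2 : lam x + x = colTop lam c + c := by rw [hy] at hhx; exact hhx
              rcases eq_or_lt_of_le hx1 with heq | hpx
              · refine hcross x y (Or.inl ⟨heq.symm, ?_, ?_⟩) hsp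
                · rw [hy]; omega
                · rw [hy]; exact hpc.2.2
              · have := hrowc x hpx hx2
                omega
        have := hm p c hcand (le_refl _) (le_of_lt hlt)
        omega

/-- F2: distinct comparable special boxes are strictly comparable in rows. -/
lemma comp_strict {ℓ : ℕ} {lam : ℕ → ℕ} (hlam : IsPartitionFun ℓ lam)
    {i j i' j' : ℕ} (hs : IsSpecial lam i j) (hs' : IsSpecial lam i' j')
    (hii : i ≤ i') (hjj : j < j') : i < i' := by
  by_contra hcon
  have hie : i = i' := by omega
  subst hie
  obtain ⟨z, hz⟩ := hs
  obtain ⟨z', hz'⟩ := hs'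
  obtain ⟨y, hy1, hc, hm⟩ := exists_level z i j hz
  obtain ⟨y', hy1', hc', hm'⟩ := exists_level z' i j' hz'
  rcases le_or_gt y y' with hy | hy
  · have hc'' : CandAt lam (SpecialLevels lam y) i j' :=
      ⟨hc'.1, hc'.2.1, fun a b hab hsp => hc'.2.2 a b hab (SL_mono hy hsp)⟩
    have := hm i j' hc'' (le_refl _) (le_of_lt hjj)
    omega
  · have hSL : SpecialLevels lam y i j' :=
      SL_mono (show y' + 1 ≤ y by omega) (Or.inr ⟨hc', hm'⟩)
    exact hc.2.2 i j' (Or.inl ⟨rfl, le_of_lt hjj, hc'.1.2.2⟩) hSL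

lemma Dstep {ℓ : ℕ} {lam : ℕ → ℕ} (hlam : IsPartitionFun ℓ lam) (T : ℕ → ℕ → ℕ)
    (hrec : ∀ i j, InShape lam i j → ¬ NECorner lam i j → RecursionAt lam T i j)
    {r q : ℕ} (h1 : InShape lam (r+1) q) (hne : ¬ NECorner lam (r+1) q)
    (h2 : InShape lam r (q+1)) : T (r+1) q ≤ T r (q+1) + 1 := by
  have h := hrec (r+1) q h1 hne
  unfold RecursionAt at h
  rw [Nat.add_sub_cancel] at h
  have hext : extT lam T r (q+1) = (T r (q+1) : ℕ∞) := by
    have hq1 : q + 1 ≤ lam 1 := le_trans h2.2.2 (lam_anti hlam le_rfl h2.1)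
    have hr1 : r ≠ 0 := by have := h2.1; omega
    unfold extT
    rw [if_neg (by omega), if_neg hr1, if_pos h2]
  rw [hext] at h
  have hle : (T (r+1) q : ℕ∞) ≤ (T r (q+1) : ℕ∞) + 1 := le_of_eq_of_le h (min_le_right _ _)
  have h2' : (T (r+1) q : ℕ∞) ≤ ((T r (q+1) + 1 : ℕ) : ℕ∞) := by push_cast; exact hle
  exact_mod_cast h2'

theorem statement12 (ℓ : ℕ) (lam b : ℕ → ℕ)
    (hlam : IsPartitionFun ℓ lam)
    (T : ℕ → ℕ → ℕ) (hT : T ∈ SSYTset lam b)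
    (hrec : ∀ i j, InShape lam i j → ¬ NECorner lam i j → RecursionAt lam T i j)
    (i j i' j' : ℕ)
    (hs : IsSpecial lam i j) (hs' : IsSpecial lam i' j')
    (hii : i ≤ i') (hjj : j ≤ j') :
    (T (colTop lam j) j : ℤ) - (colTop lam j : ℤ)
      ≤ (T (colTop lam j') j' : ℤ) - (colTop lam j' : ℤ) := by
  rcases eq_or_ne j j' with rfl | hjne
  · exact le_refl _
  have hjlt : j < j' := lt_of_le_of_ne hjj hjne
  obtain ⟨z, hz⟩ := hs
  obtain ⟨z', hz'⟩ := hs'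
  obtain ⟨hin, hh, hrowc⟩ := specialMatched hlam z i j hz
  obtain ⟨hin', hh', hrowc'⟩ := specialMatched hlam z' i' j' hz'
  have hilt : i < i' := comp_strict hlam ⟨z, hz⟩ ⟨z', hz'⟩ hii hjlt
  set t := colTop lam j with htdef
  set t' := colTop lam j' with ht'def
  have h1j : 1 ≤ j := hin.2.1
  have h1i : 1 ≤ i := hin.1
  have hti : i ≤ t := le_colTop hlam hin
  have ht'i : i' ≤ t' := le_colTop hlam hin'
  have ht'2 : 2 ≤ t' := by omega
  have htt' : t' ≤ t := colTop_anti hlam h1j (le_of_lt hjlt)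
  have hcoltop : ∀ q, 1 ≤ q → q ≤ j' → t' ≤ colTop lam q :=
    fun q hq1 hq2 => colTop_anti hlam hq1 hq2
  have hc6 : ∀ q, j < q → q ≤ j' → t + j + 1 ≤ colTop lam q + q := by
    intro q hq1 hq2
    have hq1' : 1 ≤ q := by omega
    have hjla : j' ≤ lam i' := hin'.2.2
    have hlami : lam i' ≤ lam i := lam_anti hlam h1i hii
    have hqub : q + 1 ≤ t + j := by omega
    by_cases hri : t + j + 1 - q ≤ i'
    · have := hcoltop q hq1' hq2; omega
    · push_neg at hri
      have hrow := hrowc (t + j + 1 - q) (by omega) (by omega)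
      have hqlam : q ≤ lam (t + j + 1 - q) := by omega
      have hcq := (lam_le_iff hlam (by omega) hq1').mp hqlam
      omega
  have hcolS := hT.1.2.2
  have climb : ∀ d, j + d ≤ j' →
      (T t j : ℤ) - t ≤ (T (max (t - d) t') (j + d) : ℤ) - (max (t - d) t') := by
    intro d
    induction d with
    | zero => intro _; rw [Nat.sub_zero, Nat.add_zero, max_eq_left htt']
    | succ d IH =>
      intro hd
      have IH' := IH (by omega)
      by_cases hc : t' < t - d
      · have hA : max (t - d) t' = t - d := max_eq_left (le_of_lt hc)
        have hsub : t - (d + 1) = t - d - 1 := by omega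
        have hA2 : max (t - (d + 1)) t' = t - d - 1 := by
          rw [hsub, max_eq_left (by omega)]
        have hcq : t - d ≤ colTop lam (j + d) := by
          rcases Nat.eq_zero_or_pos d with rfl | hd0
          · rw [Nat.add_zero, Nat.sub_zero]
          · have := hc6 (j + d) (by omega) (by omega); omega
        have hcq1 : t - d ≤ colTop lam (j + d + 1) := by
          have := hc6 (j + d + 1) (by omega) (by omega); omega
        have hin1 : InShape lam (t - d) (j + d) :=
          ⟨by omega, by omega, (lam_le_iff hlam (by omega) (by omega)).mpr hcq⟩
        have hinR : InShape lam (t - d) (j + d + 1) :=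
          ⟨by omega, by omega, (lam_le_iff hlam (by omega) (by omega)).mpr hcq1⟩
        have hin2 : InShape lam (t - d - 1) (j + d + 1) :=
          ⟨by omega, by omega, (lam_le_iff hlam (by omega) (by omega)).mpr (by omega)⟩
        have hnec : ¬ NECorner lam (t - d) (j + d) := fun hx => hx.2.2 hinR
        have heq : t - d - 1 + 1 = t - d := by omega
        have hD := Dstep hlam T hrec (r := t - d - 1) (q := j + d)
          (by rw [heq]; exact hin1) (by rw [heq]; exact hnec) hin2
        rw [heq] at hD
        rw [hA] at IH'
        have hcast : (T (t - d) (j + d) : ℤ) ≤ (T (t - d - 1) (j + d + 1) : ℤ) + 1 := by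
          exact_mod_cast hD
        show (T t j : ℤ) - t ≤ (T (max (t - d - 1) t') (j + d + 1) : ℤ) - (max (t - d - 1) t')
        rw [max_eq_left (show t' ≤ t - d - 1 by omega)]
        omega
      · push_neg at hc
        have hA : max (t - d) t' = t' := max_eq_right hc
        have hA2 : max (t - (d + 1)) t' = t' := max_eq_right (by omega)
        have hinq : InShape lam t' (j + d) :=
          ⟨by omega, by omega, (lam_le_iff hlam (by omega) (by omega)).mpr
            (hcoltop (j + d) (by omega) (by omega))⟩
        have hinR : InShape lam t' (j + d + 1) :=
          ⟨by omega, by omega, (lam_le_iff hlam (by omega) (by omega)).mpr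
            (hcoltop (j + d + 1) (by omega) (by omega))⟩
        have hin2 : InShape lam (t' - 1) (j + d + 1) :=
          ⟨by omega, by omega, (lam_le_iff hlam (by omega) (by omega)).mpr
            (by have := hcoltop (j + d + 1) (by omega) (by omega); omega)⟩
        have heq : t' - 1 + 1 = t' := by omega
        have hnec : ¬ NECorner lam t' (j + d) := fun hx => hx.2.2 hinR
        have hD := Dstep hlam T hrec (r := t' - 1) (q := j + d)
          (by rw [heq]; exact hinq) (by rw [heq]; exact hnec) hin2
        rw [heq] at hD
        have hU := hcolS (t' - 1) (j + d + 1) hin2 (by rw [heq]; exact hinR)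
        rw [heq] at hU
        rw [hA] at IH'
        have hle : T t' (j + d) ≤ T t' (j + d + 1) := by omega
        have hcast : (T t' (j + d) : ℤ) ≤ (T t' (j + d + 1) : ℤ) := by exact_mod_cast hle
        show (T t j : ℤ) - t ≤ (T (max (t - d - 1) t') (j + d + 1) : ℤ) - (max (t - d - 1) t')
        rw [max_eq_right (show t - d - 1 ≤ t' by omega)]
        omega
  have hfin := climb (j' - j) (by omega)
  have hjj'' : j + (j' - j) = j' := by omega
  rw [hjj''] at hfin
  have hmaxf : max (t - (j' - j)) t' = t' := by
    have := hc6 j' hjlt le_rfl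
    rw [max_eq_right (by omega)]
  rw [hmaxf] at hfin
  exact hfin


end DriftKL
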